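/- Let L be an o_E-lattice in V, 𝓛̂ = {a ∈ End_E(V) : a(L) ⊆ L}, and k ≥ 1. If g ∈ (1 + ϖ^k 𝓛̂) ∩ GU(V), then the multiplier μ(g) lies in 1 + p_F^k. -/

import Mathlib

/- STATEMENT 9: With F, E, V, the hermitian form B and the o_E-lattice L as
before, let 𝓛̂ = {a ∈ End_E(V) : a(L) ⊆ L}, ϖ a uniformizer of F (v ϖ < 1 and
v x < 1 → v x ≤ v ϖ), and k ≥ 1. If g = 1 + ϖ^k·X with X ∈ 𝓛̂ and g ∈ GU(V)
with multiplier μ, then μ ∈ 1 + p_F^k, i.e. v (μ - 1) ≤ (v ϖ)^k. -/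
theorem multiplier_congruence
    {F E V Γ₀ Γ₁ : Type*} [Field F] [Field E] [Algebra F E]
    [AddCommGroup V] [Module E V] [FiniteDimensional E V] [Nontrivial V]
    [LinearOrderedCommGroupWithZero Γ₀] [LinearOrderedCommGroupWithZero Γ₁]
    (hFE : Module.finrank F E ≤ 2)
    (v : Valuation F Γ₀) (w : Valuation E Γ₁)
    (hcompat : ∀ x : F, w (algebraMap F E x) ≤ 1 ↔ v x ≤ 1)
    (ϖ : F) (hϖ0 : ϖ ≠ 0) (hϖ1 : v ϖ < 1) (hϖ2 : ∀ x : F, v x < 1 → v x ≤ v ϖ)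
    (τ : E →+* E) (hτ : ∀ a : E, τ (τ a) = a) (hτw : ∀ a : E, w (τ a) = w a)
    (hτF : ∀ x : F, τ (algebraMap F E x) = algebraMap F E x)
    (ε : E) (hε : ε = 1 ∨ ε = -1)
    (B : V → V → E)
    (haddl : ∀ u u' u'' : V, B (u + u') u'' = B u u'' + B u' u'')
    (hsmull : ∀ (c : E) (u u' : V), B (c • u) u' = c * B u u')
    (hherm : ∀ u u' : V, B u u' = ε * τ (B u' u))
    (hnd : ∀ u : V, (∀ u' : V, B u u' = 0) → u = 0)
    (L : AddSubgroup V)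
    (hLsmul : ∀ c : E, w c ≤ 1 → ∀ x ∈ L, c • x ∈ L)
    (hLspan : Submodule.span E (L : Set V) = ⊤)
    (s : Finset V) (hsL : ∀ x ∈ s, x ∈ L)
    (hLfg : ∀ x ∈ L, ∃ c : V → E, (∀ i ∈ s, w (c i) ≤ 1) ∧ x = ∑ i ∈ s, c i • i)
    (k : ℕ) (hk : 1 ≤ k)
    (g : V →ₗ[E] V)
    (hg : ∃ X : V →ₗ[E] V, (∀ x ∈ L, X x ∈ L) ∧
        g = 1 + (algebraMap F E (ϖ ^ k)) • X)
    (μ : F)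
    (hgGU : ∀ u u' : V, B (g u) (g u') = algebraMap F E μ * B u u') :
    v (μ - 1) ≤ (v ϖ) ^ k := by
  classical
  -- additivity and semilinearity in the second variable
  have haddr : ∀ u u' u'' : V, B u (u' + u'') = B u u' + B u u'' := by
    intro u u' u''
    rw [hherm u (u' + u''), haddl, map_add, mul_add, ← hherm u u', ← hherm u u'']
  have hsmulr : ∀ (c : E) (u u' : V), B u (c • u') = τ c * B u u' := by
    intro c u u'
    rw [hherm u (c • u'), hsmull, map_mul, hherm u u']; ring
  have hB0l : ∀ u : V, B 0 u = 0 := by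
    intro u
    have h := haddl 0 0 u
    rw [zero_add] at h
    exact add_left_cancel (h.symm.trans (add_zero _).symm)
  have hB0r : ∀ u : V, B u 0 = 0 := by
    intro u
    rw [hherm, hB0l, map_zero, mul_zero]
  -- expansion of B on sums
  have hBsuml : ∀ (t : Finset V) (c : V → E) (y : V),
      B (∑ i ∈ t, c i • i) y = ∑ i ∈ t, c i * B i y := by
    intro t c y
    induction t using Finset.induction_on with
    | empty => simpa using hB0l y
    | insert _ _ h ih =>
        rw [Finset.sum_insert h, haddl, hsmull, ih, Finset.sum_insert h]
  have hBsumr : ∀ (t : Finset V) (d : V → E) (x : V),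
      B x (∑ j ∈ t, d j • j) = ∑ j ∈ t, τ (d j) * B x j := by
    intro t d x
    induction t using Finset.induction_on with
    | empty => simpa using hB0r x
    | insert _ _ h ih =>
        rw [Finset.sum_insert h, haddr, hsmulr, ih, Finset.sum_insert h]
  -- B is not identically zero on L × L
  have hL0 : ¬ (∀ x ∈ L, ∀ y ∈ L, B x y = 0) := by
    intro hall
    have hallV1 : ∀ x : V, ∀ y ∈ L, B x y = 0 := by
      intro x y hy
      have hx : x ∈ Submodule.span E (L : Set V) := by rw [hLspan]; trivial
      induction hx using Submodule.span_induction with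
      | mem z hz => exact hall z hz y hy
      | zero => exact hB0l y
      | add a b _ _ ha hb => rw [haddl, ha, hb, add_zero]
      | smul c a _ ha => rw [hsmull, ha, mul_zero]
    have hallV : ∀ x y : V, B x y = 0 := by
      intro x y
      have hy : y ∈ Submodule.span E (L : Set V) := by rw [hLspan]; trivial
      induction hy using Submodule.span_induction with
      | mem z hz => exact hallV1 x z hz
      | zero => exact hB0r x
      | add a b _ _ ha hb => rw [haddr, ha, hb, add_zero]
      | smul c a _ ha => rw [hsmulr, ha, mul_zero]
    obtain ⟨v0, hv0⟩ := exists_ne (0 : V)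
    exact hv0 (hnd v0 (hallV v0))
  -- s is nonempty
  have hsne : s.Nonempty := by
    rw [Finset.nonempty_iff_ne_empty]
    intro hse
    apply hL0
    intro x hx y hy
    obtain ⟨c, _, hc⟩ := hLfg x hx
    rw [hse, Finset.sum_empty] at hc
    rw [hc, hB0l]
  -- choose the pair maximizing w (B i j)
  obtain ⟨p, hp, hpmax⟩ := Finset.exists_max_image (s ×ˢ s)
    (fun q => w (B q.1 q.2)) (hsne.product hsne)
  set M := w (B p.1 p.2) with hM
  have hpmem := Finset.mem_product.mp hp
  -- bound : w (B x y) ≤ M for all x, y ∈ L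
  have hbound : ∀ x ∈ L, ∀ y ∈ L, w (B x y) ≤ M := by
    intro x hx y hy
    obtain ⟨c, hc, hcx⟩ := hLfg x hx
    obtain ⟨d, hd, hdy⟩ := hLfg y hy
    rw [hcx, hBsuml]
    refine w.map_sum_le ?_
    intro i hi
    rw [map_mul, hdy, hBsumr]
    calc w (c i) * w (∑ j ∈ s, τ (d j) * B i j) ≤ 1 * M := by
          refine mul_le_mul' (hc i hi) ?_
          refine w.map_sum_le ?_
          intro j hj
          rw [map_mul, hτw]
          calc w (d j) * w (B i j) ≤ 1 * M :=
                mul_le_mul' (hd j hj) (hpmax (i, j) (Finset.mem_product.mpr ⟨hi, hj⟩))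
          _ = M := one_mul M
    _ = M := one_mul M
  -- M ≠ 0
  have hMne : M ≠ 0 := by
    intro hM0
    apply hL0
    intro x hx y hy
    have := hbound x hx y hy
    rw [hM0, le_zero_iff] at this
    exact w.zero_iff.mp this
  obtain ⟨X, hXL, hgX⟩ := hg
  set π : E := algebraMap F E (ϖ ^ k) with hπ
  -- key expansion
  have hexp : (algebraMap F E μ - 1) * B p.1 p.2 =
      π * (B (X p.1) p.2 + B p.1 (X p.2) + π * B (X p.1) (X p.2)) := by
    have h := hgGU p.1 p.2
    rw [hgX] at h
    simp only [LinearMap.add_apply, Module.End.one_apply, LinearMap.smul_apply] at h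
    rw [haddl, haddr, haddr, hsmull, hsmulr, hsmulr, hsmull, hτF] at h
    rw [← hπ] at h
    linear_combination -h
  have hπ1 : w π ≤ 1 := by
    rw [hπ, hcompat, map_pow]
    exact pow_le_one' (le_of_lt hϖ1) k
  have hp1L : p.1 ∈ L := hsL _ hpmem.1
  have hp2L : p.2 ∈ L := hsL _ hpmem.2
  have hrhs : w (B (X p.1) p.2 + B p.1 (X p.2) + π * B (X p.1) (X p.2)) ≤ M := by
    refine le_trans (w.map_add_le ?_ ?_) le_rfl
    · refine le_trans (w.map_add_le ?_ ?_) le_rfl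
      · exact hbound _ (hXL _ hp1L) _ hp2L
      · exact hbound _ hp1L _ (hXL _ hp2L)
    · rw [map_mul]
      calc w π * w (B (X p.1) (X p.2)) ≤ 1 * M :=
            mul_le_mul' hπ1 (hbound _ (hXL _ hp1L) _ (hXL _ hp2L))
      _ = M := one_mul M
  have hkey : w (algebraMap F E μ - 1) * M ≤ w π * M := by
    calc w (algebraMap F E μ - 1) * M
        = w ((algebraMap F E μ - 1) * B p.1 p.2) := (map_mul w _ _).symm
      _ = w π * w (B (X p.1) p.2 + B p.1 (X p.2) + π * B (X p.1) (X p.2)) := by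
          rw [hexp, map_mul]
      _ ≤ w π * M := mul_le_mul_right hrhs _
  have hwle : w (algebraMap F E μ - 1) ≤ w π :=
    le_of_mul_le_mul_right hkey (zero_lt_iff.mpr hMne)
  -- transfer back to F
  by_cases hμ : μ - 1 = 0
  · rw [hμ, map_zero]
    exact zero_le'
  · have hϖk : (ϖ : F) ^ k ≠ 0 := pow_ne_zero _ hϖ0
    have hπ0 : π ≠ 0 := by
      rw [hπ]
      exact (map_ne_zero (algebraMap F E)).mpr hϖk
    have hx : algebraMap F E ((μ - 1) / ϖ ^ k) = (algebraMap F E μ - 1) / π := by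
      rw [map_div₀, map_sub, map_one, hπ]
    have hw1 : w (algebraMap F E ((μ - 1) / ϖ ^ k)) ≤ 1 := by
      rw [hx, map_div₀]
      exact (div_le_one₀ (w.pos_iff.mpr hπ0)).mpr hwle
    have hvx : v ((μ - 1) / ϖ ^ k) ≤ 1 := (hcompat _).mp hw1
    have heq : μ - 1 = ((μ - 1) / ϖ ^ k) * ϖ ^ k := by field_simp
    calc v (μ - 1) = v ((μ - 1) / ϖ ^ k) * v (ϖ ^ k) := by
          conv_lhs => rw [heq]
          rw [map_mul]
      _ ≤ 1 * v ϖ ^ k := by rw [map_pow]; exact mul_le_mul_left hvx _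
      _ = v ϖ ^ k := one_mul _
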